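/- For all 0 < ε, δ < ∞, ‖H_ε − H_δ‖₁² ≤ (ε + δ)(‖h_ε‖² + ‖h_δ‖²). -/

import Mathlib

open MeasureTheory ProbabilityTheory

private lemma integrable_mul_of_memL2 {α : Type*} [MeasurableSpace α] {μ : Measure α}
    {f g : α → ℝ} (hf : MemLp f 2 μ) (hg : MemLp g 2 μ) :
    Integrable (fun x => f x * g x) μ := by
  have h1 := hf.integrable_sq
  have h2 := hg.integrable_sq
  refine Integrable.mono' (g := fun x => (f x ^ 2 + g x ^ 2) / 2)
    ((h1.add h2).div_const 2) (hf.1.mul hg.1) ?_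
  filter_upwards with x
  have := sq_nonneg (|f x| - |g x|)
  rw [Real.norm_eq_abs, abs_mul]
  nlinarith [abs_nonneg (f x), abs_nonneg (g x), sq_abs (f x), sq_abs (g x)]

private lemma integral_sq_expand {α : Type*} [MeasurableSpace α] (μ : Measure α)
    (f g : α → ℝ) (A B : ℝ)
    (hf : Integrable (fun x => f x ^ 2) μ) (hg : Integrable (fun x => g x ^ 2) μ)
    (hfg : Integrable (fun x => f x * g x) μ) :
    ∫ x, (A * f x - B * g x) ^ 2 ∂μ
      = A ^ 2 * ∫ x, f x ^ 2 ∂μ - 2 * A * B * ∫ x, f x * g x ∂μ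
        + B ^ 2 * ∫ x, g x ^ 2 ∂μ := by
  have hexp : ∀ x, (A * f x - B * g x) ^ 2
      = A ^ 2 * f x ^ 2 - 2 * A * B * (f x * g x) + B ^ 2 * g x ^ 2 := by
    intro x; ring
  simp_rw [hexp]
  have hA : Integrable (fun x => A ^ 2 * f x ^ 2 - 2 * A * B * (f x * g x)) μ :=
    (hf.const_mul _).sub (hfg.const_mul _)
  have hB : Integrable (fun x => B ^ 2 * g x ^ 2) μ := hg.const_mul _
  rw [integral_add hA hB, integral_sub (hf.const_mul _) (hfg.const_mul _),
    integral_const_mul, integral_const_mul, integral_const_mul]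

/-- For all `0 < ε, δ < ∞`, `‖H_ε - H_δ‖₁² ≤ (ε+δ)(‖h_ε‖² + ‖h_δ‖²)`, where
`H_ε(x₀,x₁) = h_ε(x₁) - Qh_ε(x₀)`, `h_ε` solves `(1+ε)h_ε = Qh_ε + g`, and
`π₁ = π ⊗ κ`. -/
theorem stmt4 {X : Type*} [MeasurableSpace X] (π : Measure X) [IsProbabilityMeasure π]
    (κ : Kernel X X) [IsMarkovKernel κ]
    (hinv : π.bind (fun x => κ x) = π)
    (g : X → ℝ) (hgm : Measurable g) (hg2 : MemLp g 2 π) (hg0 : ∫ x, g x ∂π = 0)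
    (ε δ : ℝ) (hε : 0 < ε) (hδ : 0 < δ)
    (hε' qε hδ' qδ : X → ℝ)
    (hεm : Measurable hε') (hδm : Measurable hδ')
    (hε2 : MemLp hε' 2 π) (hδ2 : MemLp hδ' 2 π)
    (hqε : ∀ x, qε x = ∫ y, hε' y ∂κ x) (hqδ : ∀ x, qδ x = ∫ y, hδ' y ∂κ x)
    (hresε : ∀ᵐ x ∂π, (1 + ε) * hε' x = qε x + g x)
    (hresδ : ∀ᵐ x ∂π, (1 + δ) * hδ' x = qδ x + g x) :
    ∫ p : X × X, ((hε' p.2 - qε p.1) - (hδ' p.2 - qδ p.1)) ^ 2 ∂(π.compProd κ)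
      ≤ (ε + δ) * ((∫ x, (hε' x) ^ 2 ∂π) + ∫ x, (hδ' x) ^ 2 ∂π) := by
  -- abbreviations
  set u : X → ℝ := fun x => hε' x - hδ' x with hu
  set w : X → ℝ := fun x => (1 + ε) * hε' x - (1 + δ) * hδ' x with hw
  have hu2 : MemLp u 2 π := hε2.sub hδ2
  have hw2 : MemLp w 2 π := (hε2.const_mul (1 + ε)).sub (hδ2.const_mul (1 + δ))
  have hum : Measurable u := hεm.sub hδm
  have hwm : Measurable w := ((measurable_const.mul hεm)).sub (measurable_const.mul hδm)
  -- marginals of the comp-product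
  have hfstm : (π.compProd κ).map Prod.fst = π := Measure.fst_compProd π κ
  have hsndm : (π.compProd κ).map Prod.snd = π := by
    conv_rhs => rw [← hinv]
    ext s hs
    rw [Measure.map_apply measurable_snd hs, Measure.compProd_apply (measurable_snd hs),
      Measure.bind_apply hs κ.measurable.aemeasurable]
    rfl
  have mpsnd : MeasurePreserving Prod.snd (π.compProd κ) π := ⟨measurable_snd, hsndm⟩
  have mpfst : MeasurePreserving Prod.fst (π.compProd κ) π := ⟨measurable_fst, hfstm⟩
  -- L² memberships on the comp-product
  have husnd : MemLp (fun p : X × X => u p.2) 2 (π.compProd κ) :=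
    hu2.comp_measurePreserving mpsnd
  have hwfst : MemLp (fun p : X × X => w p.1) 2 (π.compProd κ) :=
    hw2.comp_measurePreserving mpfst
  have iu2 : Integrable (fun p : X × X => u p.2 ^ 2) (π.compProd κ) := husnd.integrable_sq
  have iw2 : Integrable (fun p : X × X => w p.1 ^ 2) (π.compProd κ) := hwfst.integrable_sq
  have iuw : Integrable (fun p : X × X => u p.2 * w p.1) (π.compProd κ) :=
    integrable_mul_of_memL2 husnd hwfst
  -- a.e. integrability of `hε'` and `hδ'` with respect to `κ x`
  have hIε : Integrable (fun p : X × X => hε' p.2) (π.compProd κ) :=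
    (hε2.comp_measurePreserving mpsnd).integrable one_le_two
  have hIδ : Integrable (fun p : X × X => hδ' p.2) (π.compProd κ) :=
    (hδ2.comp_measurePreserving mpsnd).integrable one_le_two
  have hεint : ∀ᵐ x ∂π, Integrable (fun y => hε' y) (κ x) :=
    ((Measure.integrable_compProd_iff hIε.1).mp hIε).1
  have hδint : ∀ᵐ x ∂π, Integrable (fun y => hδ' y) (κ x) :=
    ((Measure.integrable_compProd_iff hIδ.1).mp hIδ).1
  -- a.e. identity `qε - qδ = w`
  have hqw : ∀ᵐ x ∂π, qε x - qδ x = w x := by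
    filter_upwards [hresε, hresδ] with x h1 h2
    simp only [hw]
    linarith
  -- integrals over the comp-product in terms of integrals over π
  have eq_u : ∫ x, u x ^ 2 ∂π = ∫ p : X × X, u p.2 ^ 2 ∂(π.compProd κ) := by
    conv_lhs => rw [← hsndm]
    exact integral_map measurable_snd.aemeasurable
      ((hum.pow_const 2).aestronglyMeasurable)
  have eq_w : ∫ x, w x ^ 2 ∂π = ∫ p : X × X, w p.1 ^ 2 ∂(π.compProd κ) := by
    conv_lhs => rw [← hfstm]
    exact integral_map measurable_fst.aemeasurable
      ((hwm.pow_const 2).aestronglyMeasurable)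
  have eq_cross : ∫ p : X × X, u p.2 * w p.1 ∂(π.compProd κ) = ∫ x, w x ^ 2 ∂π := by
    rw [Measure.integral_compProd iuw]
    refine integral_congr_ae ?_
    filter_upwards [hεint, hδint, hqw] with x h1 h2 h3
    rw [integral_mul_const]
    have hint : ∫ y, u y ∂κ x = qε x - qδ x := by
      rw [hqε, hqδ]
      simp only [hu]
      exact integral_sub h1 h2
    rw [hint, h3]
    ring
  -- a.e. rewriting of the integrand
  have hcomp := MeasureTheory.ae_eq_comp (μ := π.compProd κ) (f := Prod.fst)
    (g := fun x => qε x - qδ x) (g' := w) measurable_fst.aemeasurable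
    (by rw [hfstm]; exact hqw)
  have hae : ∀ᵐ p ∂(π.compProd κ),
      ((hε' p.2 - qε p.1) - (hδ' p.2 - qδ p.1)) ^ 2 = (u p.2 - w p.1) ^ 2 := by
    filter_upwards [hcomp] with p hp
    have hp' : qε p.1 - qδ p.1 = w p.1 := hp
    simp only [hu]
    rw [show hε' p.2 - qε p.1 - (hδ' p.2 - qδ p.1)
        = (hε' p.2 - hδ' p.2) - (qε p.1 - qδ p.1) by ring, hp']
  -- integrability of π-side pieces
  have ia : Integrable (fun x => hε' x ^ 2) π := hε2.integrable_sq
  have ib : Integrable (fun x => hδ' x ^ 2) π := hδ2.integrable_sq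
  have ic : Integrable (fun x => hε' x * hδ' x) π := integrable_mul_of_memL2 hε2 hδ2
  set a : ℝ := ∫ x, hε' x ^ 2 ∂π with ha_def
  set b : ℝ := ∫ x, hδ' x ^ 2 ∂π with hb_def
  set c : ℝ := ∫ x, hε' x * hδ' x ∂π with hc_def
  have ha : 0 ≤ a := integral_nonneg fun x => sq_nonneg _
  have hb : 0 ≤ b := integral_nonneg fun x => sq_nonneg _
  have e1 : ∫ x, u x ^ 2 ∂π = a - 2 * c + b := by
    have h := integral_sq_expand π hε' hδ' 1 1 ia ib ic
    simp only [one_mul, one_pow] at h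
    simpa [hu, ← ha_def, ← hb_def, ← hc_def] using h
  have e2 : ∫ x, w x ^ 2 ∂π
      = (1 + ε) ^ 2 * a - 2 * (1 + ε) * (1 + δ) * c + (1 + δ) ^ 2 * b :=
    integral_sq_expand π hε' hδ' (1 + ε) (1 + δ) ia ib ic
  have e4 : 0 ≤ ε ^ 2 * a - 2 * ε * δ * c + δ ^ 2 * b := by
    rw [← integral_sq_expand π hε' hδ' ε δ ia ib ic]
    exact integral_nonneg fun x => sq_nonneg _
  have e5 : 0 ≤ a - 2 * c + b := by
    rw [← e1]
    exact integral_nonneg fun x => sq_nonneg _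
  -- main computation
  have hmain : ∫ p : X × X, ((hε' p.2 - qε p.1) - (hδ' p.2 - qδ p.1)) ^ 2 ∂(π.compProd κ)
      = (a - 2 * c + b)
        - ((1 + ε) ^ 2 * a - 2 * (1 + ε) * (1 + δ) * c + (1 + δ) ^ 2 * b) := by
    rw [integral_congr_ae hae]
    have hexpand := integral_sq_expand (π.compProd κ)
      (fun p : X × X => u p.2) (fun p : X × X => w p.1) 1 1 iu2 iw2 iuw
    simp only [one_mul, one_pow] at hexpand
    rw [hexpand, ← eq_u, ← eq_w, eq_cross, e1, e2]
    ring
  rw [hmain]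
  nlinarith [mul_nonneg (by linarith : (0:ℝ) ≤ ε + δ) e5, mul_nonneg hε.le ha,
    mul_nonneg hδ.le hb, e4]
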